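/- Let f_A, f_a > 0, D_A, D_a, C_{A,A}, C_{A,a}, C_{a,A}, C_{a,a} be real numbers, r ∈ [0,1], and let n_{Ab1}, n_{Ab2}, n_{ab1}, n_{ab2} : [0,∞) → (0,∞) be differentiable functions satisfying, for each (α,β) ∈ {A,a}×{b1,b2} and all t ≥ 0, n_{αβ}'(t) = (f_α − D_α − C_{α,A} n_A(t) − C_{α,a} n_a(t))·n_{αβ}(t) + r f_A f_a·(n_{ᾱβ}(t) n_{αβ̄}(t) − n_{αβ}(t) n_{ᾱβ̄}(t))/(f_A n_A(t) + f_a n_a(t)), where n_A = n_{Ab1} + n_{Ab2}, n_a = n_{ab1} + n_{ab2}, and ᾱ, β̄ denote the complementary alleles. Then: (i) for α ∈ {A,a}, n_α'(t) = (f_α − D_α − C_{α,A} n_A(t) − C_{α,a} n_a(t))·n_α(t); (ii) g := n_{Ab1}/n_A − n_{ab1}/n_a satisfies g'(t) = −g(t)·r f_A f_a (n_A(t) + n_a(t))/(f_A n_A(t) + f_a n_a(t)); (iii) p := n_{ab1}/n_a satisfies p'(t) = g(t)·r f_A f_a n_A(t)/(f_A n_A(t) + f_a n_a(t)). -/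

import Mathlib

/-- Change of variables for the four-dimensional deterministic system: if the
four positive densities `n_{αβ}` solve the recombination ODE system, then the
total densities `n_A, n_a` solve the Lotka–Volterra system, the difference of
neutral proportions `g = n_{Ab₁}/n_A − n_{ab₁}/n_a` decays with rate
`r f_A f_a (n_A+n_a)/(f_A n_A+f_a n_a)`, and the neutral proportion
`p = n_{ab₁}/n_a` satisfies `p' = g · r f_A f_a n_A/(f_A n_A+f_a n_a)`. -/
theorem four_dim_system_change_of_variables
    (fA fa DA Da CAA CAa CaA Caa r : ℝ)
    (hfA : 0 < fA) (hfa : 0 < fa) (hr : r ∈ Set.Icc (0:ℝ) 1)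
    (nAb1 nAb2 nab1 nab2 : ℝ → ℝ)
    (hposAb1 : ∀ t, 0 ≤ t → 0 < nAb1 t) (hposAb2 : ∀ t, 0 ≤ t → 0 < nAb2 t)
    (hposab1 : ∀ t, 0 ≤ t → 0 < nab1 t) (hposab2 : ∀ t, 0 ≤ t → 0 < nab2 t)
    (hodeAb1 : ∀ t, 0 ≤ t → HasDerivAt nAb1
      ((fA - DA - CAA * (nAb1 t + nAb2 t) - CAa * (nab1 t + nab2 t)) * nAb1 t
        + r * fA * fa * (nab1 t * nAb2 t - nAb1 t * nab2 t) /
          (fA * (nAb1 t + nAb2 t) + fa * (nab1 t + nab2 t))) t)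
    (hodeAb2 : ∀ t, 0 ≤ t → HasDerivAt nAb2
      ((fA - DA - CAA * (nAb1 t + nAb2 t) - CAa * (nab1 t + nab2 t)) * nAb2 t
        + r * fA * fa * (nab2 t * nAb1 t - nAb2 t * nab1 t) /
          (fA * (nAb1 t + nAb2 t) + fa * (nab1 t + nab2 t))) t)
    (hodeab1 : ∀ t, 0 ≤ t → HasDerivAt nab1
      ((fa - Da - CaA * (nAb1 t + nAb2 t) - Caa * (nab1 t + nab2 t)) * nab1 t
        + r * fA * fa * (nAb1 t * nab2 t - nab1 t * nAb2 t) /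
          (fA * (nAb1 t + nAb2 t) + fa * (nab1 t + nab2 t))) t)
    (hodeab2 : ∀ t, 0 ≤ t → HasDerivAt nab2
      ((fa - Da - CaA * (nAb1 t + nAb2 t) - Caa * (nab1 t + nab2 t)) * nab2 t
        + r * fA * fa * (nAb2 t * nab1 t - nab2 t * nAb1 t) /
          (fA * (nAb1 t + nAb2 t) + fa * (nab1 t + nab2 t))) t) :
    (∀ t, 0 ≤ t → HasDerivAt (fun u => nAb1 u + nAb2 u)
        ((fA - DA - CAA * (nAb1 t + nAb2 t) - CAa * (nab1 t + nab2 t)) *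
          (nAb1 t + nAb2 t)) t) ∧
    (∀ t, 0 ≤ t → HasDerivAt (fun u => nab1 u + nab2 u)
        ((fa - Da - CaA * (nAb1 t + nAb2 t) - Caa * (nab1 t + nab2 t)) *
          (nab1 t + nab2 t)) t) ∧
    (∀ t, 0 ≤ t → HasDerivAt
        (fun u => nAb1 u / (nAb1 u + nAb2 u) - nab1 u / (nab1 u + nab2 u))
        (-(nAb1 t / (nAb1 t + nAb2 t) - nab1 t / (nab1 t + nab2 t)) *
          (r * fA * fa * ((nAb1 t + nAb2 t) + (nab1 t + nab2 t)) /
            (fA * (nAb1 t + nAb2 t) + fa * (nab1 t + nab2 t)))) t) ∧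
    (∀ t, 0 ≤ t → HasDerivAt (fun u => nab1 u / (nab1 u + nab2 u))
        ((nAb1 t / (nAb1 t + nAb2 t) - nab1 t / (nab1 t + nab2 t)) *
          (r * fA * fa * (nAb1 t + nAb2 t) /
            (fA * (nAb1 t + nAb2 t) + fa * (nab1 t + nab2 t)))) t) := by
  have key : ∀ t, 0 ≤ t →
      (fA * (nAb1 t + nAb2 t) + fa * (nab1 t + nab2 t)) ≠ 0 ∧
      (nAb1 t + nAb2 t) ≠ 0 ∧ (nab1 t + nab2 t) ≠ 0 := by
    intro t ht
    have h1 := hposAb1 t ht; have h2 := hposAb2 t ht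
    have h3 := hposab1 t ht; have h4 := hposab2 t ht
    refine ⟨?_, ?_, ?_⟩ <;> positivity
  refine ⟨?_, ?_, ?_, ?_⟩
  · intro t ht
    obtain ⟨hS, hA, ha⟩ := key t ht
    have h := (hodeAb1 t ht).add (hodeAb2 t ht)
    refine h.congr_deriv ?_
    field_simp
    ring
  · intro t ht
    obtain ⟨hS, hA, ha⟩ := key t ht
    have h := (hodeab1 t ht).add (hodeab2 t ht)
    refine h.congr_deriv ?_
    field_simp
    ring
  · intro t ht
    obtain ⟨hS, hA, ha⟩ := key t ht
    have hA' := (hodeAb1 t ht).add (hodeAb2 t ht)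
    have ha' := (hodeab1 t ht).add (hodeab2 t ht)
    have h := ((hodeAb1 t ht).div hA' hA).sub ((hodeab1 t ht).div ha' ha)
    refine h.congr_deriv ?_
    simp only [Pi.add_apply]
    field_simp
    ring
  · intro t ht
    obtain ⟨hS, hA, ha⟩ := key t ht
    have ha' := (hodeab1 t ht).add (hodeab2 t ht)
    have h := (hodeab1 t ht).div ha' ha
    refine h.congr_deriv ?_
    simp only [Pi.add_apply]
    field_simp
    ring
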